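/- Let ν be a Borel probability measure on ℝ with finite first moment and let r ≥ 0. Then the family of Borel probability measures B = { μ : ∫ f dμ − ∫ f dν ≤ r for every bounded 1-Lipschitz f : ℝ → ℝ } is tight: for every ε > 0 there exists a compact set K ⊆ ℝ with μ(ℝ \ K) ≤ ε for all μ ∈ B. -/

import Mathlib

open MeasureTheory Filter

theorem wasserstein_ball_tight (ν : Measure ℝ) [IsProbabilityMeasure ν]
    (hν : Integrable id ν) (r : ℝ) (hr : 0 ≤ r) :
    ∀ ε : ℝ, 0 < ε → ∃ K : Set ℝ, IsCompact K ∧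
      ∀ μ : Measure ℝ, IsProbabilityMeasure μ →
        (∀ f : ℝ → ℝ, LipschitzWith 1 f → (∃ C, ∀ x, |f x| ≤ C) →
          (∫ x, f x ∂μ) - ∫ x, f x ∂ν ≤ r) →
        μ Kᶜ ≤ ENNReal.ofReal ε := by
  intro ε hε
  set L : ℝ := 2 * (r + 1) / ε with hLdef
  have hLpos : 0 < L := by positivity
  have hLε : L * ε = 2 * (r + 1) := by
    rw [hLdef]; exact div_mul_cancel₀ _ hε.ne'
  have habs : Integrable (fun x : ℝ => |x|) ν := by
    simpa [Real.norm_eq_abs] using hν.norm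
  -- dominated convergence : ∫ max (|x| - n) 0 dν → 0
  have hconv : Tendsto (fun m : ℕ => ∫ x, max (|x| - (m : ℝ)) 0 ∂ν) atTop (nhds 0) := by
    have key := tendsto_integral_of_dominated_convergence
      (F := fun (m : ℕ) (x : ℝ) => max (|x| - (m : ℝ)) 0) (f := fun _ : ℝ => (0 : ℝ))
      (bound := fun x => |x|) (μ := ν) ?_ habs ?_ ?_
    · simpa using key
    · intro m
      exact ((continuous_abs.sub continuous_const).max continuous_const).aestronglyMeasurable
    · intro m
      refine Eventually.of_forall fun x => ?_
      rw [Real.norm_eq_abs, abs_of_nonneg (le_max_right _ _)]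
      exact max_le (by linarith [Nat.cast_nonneg (α := ℝ) m]) (abs_nonneg x)
    · refine Eventually.of_forall fun x => ?_
      have hev : (fun m : ℕ => max (|x| - (m : ℝ)) 0) =ᶠ[atTop] fun _ => (0 : ℝ) := by
        filter_upwards [eventually_ge_atTop ⌈|x|⌉₊] with m hm
        have h1 : |x| ≤ (m : ℝ) := (Nat.le_ceil |x|).trans (by exact_mod_cast hm)
        exact max_eq_right (by linarith)
      exact Tendsto.congr' hev.symm tendsto_const_nhds
  have hLε2 : 0 < L * ε / 2 := by positivity
  obtain ⟨n, hn⟩ : ∃ n : ℕ, ∫ x, max (|x| - (n : ℝ)) 0 ∂ν ≤ L * ε / 2 := by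
    rcases (hconv.eventually (gt_mem_nhds hLε2)).exists with ⟨n, hn⟩
    exact ⟨n, hn.le⟩
  refine ⟨Set.Icc (-((n : ℝ) + L)) ((n : ℝ) + L), isCompact_Icc, ?_⟩
  intro μ hμ hμB
  set f : ℝ → ℝ := fun x => min (max (|x| - (n : ℝ)) 0) L with hfdef
  have hf0 : ∀ x, 0 ≤ f x := fun x => le_min (le_max_right _ _) hLpos.le
  have hfL : ∀ x, f x ≤ L := fun x => min_le_right _ _
  have hlip : LipschitzWith 1 f := by
    have h1 : LipschitzWith 1 (fun x : ℝ => |x|) := by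
      exact LipschitzWith.of_dist_le_mul fun x y => by
        simpa [Real.dist_eq] using abs_abs_sub_abs_le_abs_sub x y
    have h2 : LipschitzWith 1 (fun y : ℝ => y - (n : ℝ)) := by
      refine LipschitzWith.of_dist_le_mul fun x y => ?_
      rw [Real.dist_eq, Real.dist_eq, NNReal.coe_one, one_mul, sub_sub_sub_cancel_right]
    have h3 : LipschitzWith 1 (fun y : ℝ => min (max (y - (n : ℝ)) 0) L) :=
      (h2.max_const 0).min_const L
    have := h3.comp h1
    rw [mul_one] at this
    exact this
  have hfbdd : ∃ C, ∀ x, |f x| ≤ C :=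
    ⟨L, fun x => by rw [abs_of_nonneg (hf0 x)]; exact hfL x⟩
  have hfmeas : Continuous f := hlip.continuous
  have hintμ : Integrable f μ := by
    refine Integrable.mono' (integrable_const L) hfmeas.aestronglyMeasurable ?_
    exact Eventually.of_forall fun x => by
      rw [Real.norm_eq_abs, abs_of_nonneg (hf0 x)]; exact hfL x
  have hintν : Integrable f ν := by
    refine Integrable.mono' (integrable_const L) hfmeas.aestronglyMeasurable ?_
    exact Eventually.of_forall fun x => by
      rw [Real.norm_eq_abs, abs_of_nonneg (hf0 x)]; exact hfL x
  -- upper bound on ∫ f dν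
  have hgν : Integrable (fun x : ℝ => max (|x| - (n : ℝ)) 0) ν := by
    refine Integrable.mono'
      habs ((continuous_abs.sub continuous_const).max continuous_const).aestronglyMeasurable ?_
    refine Eventually.of_forall fun x => ?_
    rw [Real.norm_eq_abs, abs_of_nonneg (le_max_right _ _)]
    exact max_le (by linarith [Nat.cast_nonneg (α := ℝ) n]) (abs_nonneg x)
  have hνf : ∫ x, f x ∂ν ≤ L * ε / 2 := by
    refine le_trans (integral_mono hintν hgν fun x => min_le_left _ _) hn
  -- lower bound on ∫ f dμ
  set S : Set ℝ := {x : ℝ | (n : ℝ) + L ≤ |x|} with hSdef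
  have hSmeas : MeasurableSet S := measurableSet_le measurable_const measurable_abs
  have hind : ∀ x, S.indicator (fun _ => L) x ≤ f x := by
    intro x
    by_cases hx : x ∈ S
    · rw [Set.indicator_of_mem hx]
      have hxS : (n : ℝ) + L ≤ |x| := hx
      exact le_min (le_trans (by linarith) (le_max_left _ _)) le_rfl
    · rw [Set.indicator_of_notMem hx]
      exact hf0 x
  have hlow : L * (μ S).toReal ≤ ∫ x, f x ∂μ := by
    have h1 : ∫ x, S.indicator (fun _ => L) x ∂μ ≤ ∫ x, f x ∂μ :=
      integral_mono ((integrable_const L).indicator hSmeas) hintμ hind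
    rwa [integral_indicator_const L hSmeas, smul_eq_mul, mul_comm] at h1
  have hball := hμB f hlip hfbdd
  have hchain : L * (μ S).toReal ≤ L * ε := by
    calc L * (μ S).toReal ≤ ∫ x, f x ∂μ := hlow
      _ ≤ ∫ x, f x ∂ν + r := by linarith
      _ ≤ L * ε / 2 + r := by linarith
      _ ≤ L * ε := by rw [hLε]; linarith
  have htoReal : (μ S).toReal ≤ ε := le_of_mul_le_mul_left hchain hLpos
  have hsubset : (Set.Icc (-((n : ℝ) + L)) ((n : ℝ) + L))ᶜ ⊆ S := by
    intro x hx
    simp only [Set.mem_compl_iff, Set.mem_Icc, not_and_or, not_le] at hx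
    show (n : ℝ) + L ≤ |x|
    rcases hx with hx | hx
    · have h1 : (n : ℝ) + L ≤ -x := by linarith
      exact le_abs.2 (Or.inr h1)
    · exact le_abs.2 (Or.inl hx.le)
  calc μ (Set.Icc (-((n : ℝ) + L)) ((n : ℝ) + L))ᶜ ≤ μ S := measure_mono hsubset
    _ = ENNReal.ofReal (μ S).toReal := (ENNReal.ofReal_toReal (measure_ne_top μ S)).symm
    _ ≤ ENNReal.ofReal ε := ENNReal.ofReal_le_ofReal htoReal
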